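/- arXiv:2307.04527 — 2 statements merged into one kernel-verified Lean document; each statement's English description precedes it below -/
import Mathlib

section
/- Let (Ω, μ) be a probability space and let α₀, α, γ, γ₀ : Ω → ℝ be square-integrable functions. Suppose m is a linear functional on L² with the representation property E[m(Δ)] = E[α₀·Δ] for all square-integrable Δ, and suppose E[Y|X] = γ₀ in the sense that E[α·(Y−γ₀)] = 0 for all square-integrable α. Then E[m(γ)] − E[m(γ₀)] + E[α·(Y−γ)] = −E[(α−α₀)·(γ−γ₀)]. -/
open MeasureTheory

/-- Product of two L² functions is integrable. -/
theorem l2_mul_integrable {Ω : Type*} [MeasurableSpace Ω] (μ : Measure Ω) (f g : Ω → ℝ)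
    (hf : MemLp f 2 μ) (hg : MemLp g 2 μ) : Integrable (fun ω => f ω * g ω) μ := by
  have h : MemLp (f • g) 1 μ := hg.smul hf (hpqr := ⟨by simp [one_div]; rw [ENNReal.inv_two_add_inv_two]⟩)
  rw [memLp_one_iff_integrable] at h
  exact h

/-- The key debiasing identity: for a linear functional `m` represented by its Riesz
representer `α₀` (so `E[m(γ)] = E[α₀ γ]`) and `γ₀` the conditional expectation of `Y`
given `X` (expressed as orthogonality of `Y - γ₀` to all square-integrable functions),
`E[m(γ)] - E[m(γ₀)] + E[α (Y - γ)] = -E[(α - α₀)(γ - γ₀)]`. -/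
theorem debiasing_identity
    {Ω : Type*} [MeasurableSpace Ω] (μ : Measure Ω) [IsProbabilityMeasure μ]
    (Y α₀ α γ γ₀ : Ω → ℝ)
    (hY : MemLp Y 2 μ) (hα₀ : MemLp α₀ 2 μ) (hα : MemLp α 2 μ)
    (hγ : MemLp γ 2 μ) (hγ₀ : MemLp γ₀ 2 μ)
    (hce : ∀ a : Ω → ℝ, MemLp a 2 μ → ∫ ω, a ω * (Y ω - γ₀ ω) ∂μ = 0) :
    (∫ ω, α₀ ω * γ ω ∂μ) - (∫ ω, α₀ ω * γ₀ ω ∂μ) + (∫ ω, α ω * (Y ω - γ ω) ∂μ)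
      = - ∫ ω, (α ω - α₀ ω) * (γ ω - γ₀ ω) ∂μ := by
  have h0 := hce α hα
  have iαY : Integrable (fun ω => α ω * Y ω) μ := l2_mul_integrable μ α Y hα hY
  have iαγ : Integrable (fun ω => α ω * γ ω) μ := l2_mul_integrable μ α γ hα hγ
  have iαγ₀ : Integrable (fun ω => α ω * γ₀ ω) μ := l2_mul_integrable μ α γ₀ hα hγ₀
  have iα₀γ : Integrable (fun ω => α₀ ω * γ ω) μ := l2_mul_integrable μ α₀ γ hα₀ hγ
  have iα₀γ₀ : Integrable (fun ω => α₀ ω * γ₀ ω) μ := l2_mul_integrable μ α₀ γ₀ hα₀ hγ₀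
  have h0' : (∫ ω, α ω * Y ω ∂μ) - ∫ ω, α ω * γ₀ ω ∂μ = 0 := by
    rw [← integral_sub iαY iαγ₀]
    simp_rw [mul_sub] at h0
    exact h0
  have e1 : ∫ ω, α ω * (Y ω - γ ω) ∂μ = (∫ ω, α ω * Y ω ∂μ) - ∫ ω, α ω * γ ω ∂μ := by
    simp_rw [mul_sub]
    exact integral_sub iαY iαγ
  have e2 : ∫ ω, (α ω - α₀ ω) * (γ ω - γ₀ ω) ∂μ
      = ((∫ ω, α ω * γ ω ∂μ) - ∫ ω, α ω * γ₀ ω ∂μ)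
        - ((∫ ω, α₀ ω * γ ω ∂μ) - ∫ ω, α₀ ω * γ₀ ω ∂μ) := by
    have i1 : Integrable (fun ω => α ω * γ ω - α ω * γ₀ ω) μ := iαγ.sub iαγ₀
    have i2 : Integrable (fun ω => α₀ ω * γ ω - α₀ ω * γ₀ ω) μ := iα₀γ.sub iα₀γ₀
    simp_rw [sub_mul, mul_sub]
    rw [integral_sub i1 i2, integral_sub iαγ iαγ₀, integral_sub iα₀γ iα₀γ₀]
  rw [e1, e2]
  linarith [h0']
end

section
/- Under the setup of the debiasing identity (linear functional m with Riesz representer α₀ and γ₀ the conditional expectation of Y given X): if α = α₀, then E[m(γ)] − θ₀ + E[α₀·(Y−γ)] = 0 for every square-integrable γ, where θ₀ = E[m(γ₀)]. -/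
open MeasureTheory

/-- Double robustness, first half: if `α = α₀` (the Riesz representer of `m`, so
`E[m(γ)] = E[α₀ γ]`) then `E[m(γ)] - θ₀ + E[α₀ (Y - γ)] = 0` for every square-integrable
`γ`, where `θ₀ = E[m(γ₀)]` and `γ₀` is the conditional expectation of `Y` given `X`. -/
theorem double_robustness_alpha
    {Ω : Type*} [MeasurableSpace Ω] (μ : Measure Ω) [IsProbabilityMeasure μ]
    (Y α₀ γ₀ : Ω → ℝ)
    (hY : MemLp Y 2 μ) (hα₀ : MemLp α₀ 2 μ) (hγ₀ : MemLp γ₀ 2 μ)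
    (hce : ∀ a : Ω → ℝ, MemLp a 2 μ → ∫ ω, a ω * (Y ω - γ₀ ω) ∂μ = 0)
    (θ₀ : ℝ) (hθ₀ : θ₀ = ∫ ω, α₀ ω * γ₀ ω ∂μ) :
    ∀ γ : Ω → ℝ, MemLp γ 2 μ →
      (∫ ω, α₀ ω * γ ω ∂μ) - θ₀ + (∫ ω, α₀ ω * (Y ω - γ ω) ∂μ) = 0 := by
  intro γ hγ
  have hmul : ∀ f g : Ω → ℝ, MemLp f 2 μ → MemLp g 2 μ →
      Integrable (fun ω => f ω * g ω) μ := by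
    intro f g hf hg
    have := hg.smul (r := 1) hf (hpqr := ⟨by rw [inv_one]; exact ENNReal.inv_two_add_inv_two⟩)
    simpa [smul_eq_mul] using (memLp_one_iff_integrable.mp this : Integrable (fun ω => f ω * g ω) μ)
  have h1 := hmul α₀ γ hα₀ hγ
  have h2 := hmul α₀ γ₀ hα₀ hγ₀
  have h3 := hmul α₀ (fun ω => Y ω - γ ω) hα₀ (hY.sub hγ)
  rw [hθ₀, ← integral_sub h1 h2]
  have h4 : Integrable (fun ω => α₀ ω * γ ω - α₀ ω * γ₀ ω) μ := h1.sub h2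
  rw [← integral_add h4 h3]
  have : (fun ω => α₀ ω * γ ω - α₀ ω * γ₀ ω + α₀ ω * (Y ω - γ ω))
      = fun ω => α₀ ω * (Y ω - γ₀ ω) := by funext ω; ring
  rw [this]
  exact hce α₀ hα₀
end
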